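/- (Lemma 4 of the paper.) Let A ∈ ℝ^{n×n}, K ∈ ℝ^{r×n}, and let C₁ ∈ ℝ^{p₁×n}, …, C_l ∈ ℝ^{p_l×n} be output matrices, with C̃ ∈ ℝ^{(p₁+⋯+p_l)×n} the matrix obtained by vertically stacking C₁, …, C_l. Then the system is jointly partially detectable with respect to K — i.e., for every differentiable x : ℝ → ℝⁿ with x'(t) = A x(t) and C_i x(t) = 0 for all t ≥ 0 and all i = 1,…,l, one has K x(t) → 0 as t → ∞ — if and only if for every λ ∈ ℂ with Re λ ≥ 0, the rank of the complex matrix obtained by stacking D_{[A,C̃],n,λ} on top of K equals the rank of D_{[A,C̃],n,λ}. -/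

import Mathlib

open Matrix

/-- The stacked matrix `D_{[A,C],k,λ}`, obtained by vertically stacking the blocks
`C, C(λI−A), C(λI−A)², …, C(λI−A)^{k−1}` and `(λI−A)^k`, with real matrices coerced
entrywise into `ℂ`. Rows of the block `C(λI−A)^j` are indexed by `(j, row of C)`. -/
noncomputable def Dstack {n : ℕ} {p : Type*} (k : ℕ) (A : Matrix (Fin n) (Fin n) ℝ)
    (C : Matrix p (Fin n) ℝ) (lam : ℂ) : Matrix ((Fin k × p) ⊕ Fin n) (Fin n) ℂ :=
  Matrix.fromRows
    (Matrix.of fun ki j =>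
      ((C.map Complex.ofReal) *
        (lam • (1 : Matrix (Fin n) (Fin n) ℂ) - A.map Complex.ofReal) ^ (ki.1 : ℕ)) ki.2 j)
    ((lam • (1 : Matrix (Fin n) (Fin n) ℂ) - A.map Complex.ofReal) ^ k)

open Filter NormedSpace

namespace Stmt10Aux

lemma rank_fromRows_eq_iff {m₁ m₂ nn : Type*} [Fintype m₁] [Fintype m₂] [Fintype nn]
    (M : Matrix m₁ nn ℂ) (N : Matrix m₂ nn ℂ) :
    (Matrix.fromRows M N).rank = M.rank ↔ ∀ v, M.mulVec v = 0 → N.mulVec v = 0 := by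
  have hker : ∀ v : nn → ℂ, (Matrix.fromRows M N).mulVec v = 0 ↔
      (M.mulVec v = 0 ∧ N.mulVec v = 0) := by
    intro v
    rw [Matrix.fromRows_mulVec]
    constructor
    · intro h
      constructor
      · funext i; exact congrFun h (Sum.inl i)
      · funext i; exact congrFun h (Sum.inr i)
    · rintro ⟨h1, h2⟩
      funext i
      cases i with
      | inl i => simp [h1]
      | inr i => simp [h2]
  have hker' : LinearMap.ker (Matrix.fromRows M N).mulVecLin
      = LinearMap.ker M.mulVecLin ⊓ LinearMap.ker N.mulVecLin := by
    ext v
    simp only [LinearMap.mem_ker, Matrix.mulVecLin_apply, Submodule.mem_inf]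
    exact hker v
  have hle : LinearMap.ker (Matrix.fromRows M N).mulVecLin ≤ LinearMap.ker M.mulVecLin := by
    rw [hker']; exact inf_le_left
  have hrn1 := LinearMap.finrank_range_add_finrank_ker (Matrix.fromRows M N).mulVecLin
  have hrn2 := LinearMap.finrank_range_add_finrank_ker M.mulVecLin
  have hrank1 : (Matrix.fromRows M N).rank
      = Module.finrank ℂ (LinearMap.range (Matrix.fromRows M N).mulVecLin) := rfl
  have hrank2 : M.rank = Module.finrank ℂ (LinearMap.range M.mulVecLin) := rfl
  constructor
  · intro h v hv
    have hfr : Module.finrank ℂ (LinearMap.ker (Matrix.fromRows M N).mulVecLin)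
        = Module.finrank ℂ (LinearMap.ker M.mulVecLin) := by
      rw [hrank1, hrank2] at h
      omega
    have heq := Submodule.eq_of_le_of_finrank_eq hle hfr
    have hvmem : v ∈ LinearMap.ker M.mulVecLin := by
      simpa [LinearMap.mem_ker, Matrix.mulVecLin_apply] using hv
    rw [← heq, hker'] at hvmem
    simpa [LinearMap.mem_ker, Matrix.mulVecLin_apply] using hvmem.2
  · intro h
    have heq : LinearMap.ker (Matrix.fromRows M N).mulVecLin = LinearMap.ker M.mulVecLin := by
      refine le_antisymm hle ?_
      intro v hv
      simp only [LinearMap.mem_ker, Matrix.mulVecLin_apply] at hv ⊢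
      exact (hker v).2 ⟨hv, h v hv⟩
    rw [hrank1, hrank2]
    rw [heq] at hrn1
    omega


lemma dstack_mulVec_eq_zero_iff {n : ℕ} {p : Type*} [Fintype p] (k : ℕ)
    (A : Matrix (Fin n) (Fin n) ℝ) (Ct : Matrix p (Fin n) ℝ) (lam : ℂ) (v : Fin n → ℂ) :
    (Dstack k A Ct lam).mulVec v = 0 ↔
      ((∀ m : Fin k, ((Ct.map Complex.ofReal) *
          (lam • (1 : Matrix (Fin n) (Fin n) ℂ) - A.map Complex.ofReal) ^ (m : ℕ)).mulVec v = 0)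
        ∧ (((lam • (1 : Matrix (Fin n) (Fin n) ℂ) - A.map Complex.ofReal) ^ k).mulVec v = 0)) := by
  rw [Dstack, Matrix.fromRows_mulVec]
  constructor
  · intro h
    refine ⟨fun m => ?_, ?_⟩
    · funext q
      exact congrFun h (Sum.inl (m, q))
    · funext i
      exact congrFun h (Sum.inr i)
  · rintro ⟨h1, h2⟩
    funext i
    cases i with
    | inl mq =>
      have := congrFun (h1 mq.1) mq.2
      simpa [Matrix.mulVec, dotProduct] using this
    | inr i => simp [h2]


lemma ofReal_mulVec {m' n' : Type*} [Fintype n'] (M : Matrix m' n' ℝ) (v : n' → ℝ) :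
    (M.map Complex.ofReal).mulVec (fun j => (v j : ℂ)) = fun i => ((M.mulVec v i : ℝ) : ℂ) := by
  funext i
  simp only [Matrix.mulVec, dotProduct, Matrix.map_apply]
  push_cast
  rfl


lemma mulVec_re_im {m' n' : Type*} [Fintype n'] (M : Matrix m' n' ℝ) (w : n' → ℂ) :
    (M.map Complex.ofReal).mulVec w =
      (fun i => ((M.mulVec (fun j => (w j).re) i : ℝ) : ℂ)) +
        Complex.I • (fun i => ((M.mulVec (fun j => (w j).im) i : ℝ) : ℂ)) := by
  funext i
  apply Complex.ext
  · simp [Matrix.mulVec, dotProduct, Matrix.map_apply, Complex.re_sum, Complex.mul_re]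
  · simp [Matrix.mulVec, dotProduct, Matrix.map_apply, Complex.im_sum, Complex.mul_im]


variable {n : ℕ}

lemma hasDerivAt_exp_comp_linear {F : Type*} [NormedAddCommGroup F] [NormedSpace ℝ F]
    (A : Matrix (Fin n) (Fin n) ℝ) (L : Matrix (Fin n) (Fin n) ℝ →ₗ[ℝ] F) (t : ℝ) :
    HasDerivAt (fun s : ℝ => L (exp (s • A))) (L (A * exp (t • A))) t := by
  letI : NormedRing (Matrix (Fin n) (Fin n) ℝ) := Matrix.linftyOpNormedRing
  letI : NormedAlgebra ℝ (Matrix (Fin n) (Fin n) ℝ) := Matrix.linftyOpNormedAlgebra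
  have h := hasDerivAt_exp_smul_const' (𝕂 := ℝ) A t
  exact (L.toContinuousLinearMap.hasFDerivAt.comp_hasDerivAt t h : _)

lemma hasDerivAt_expVec {q : Type*} [Fintype q] (A : Matrix (Fin n) (Fin n) ℝ)
    (N : Matrix q (Fin n) ℝ) (u : Fin n → ℝ) (t : ℝ) :
    HasDerivAt (fun s : ℝ => ((N * exp (s • A)).mulVec u))
      ((N * (A * exp (t • A))).mulVec u) t := by
  have := hasDerivAt_exp_comp_linear A
    { toFun := fun X => (N * X).mulVec u
      map_add' := by intro X Y; simp only [Matrix.mul_add, Matrix.add_mulVec]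
      map_smul' := by intro c X; simp only [Matrix.mul_smul, Matrix.smul_mulVec,
        RingHom.id_apply] } t
  simpa using this


lemma hasDerivAt_exp_entry (A : Matrix (Fin n) (Fin n) ℝ) (i j : Fin n) (t : ℝ) :
    HasDerivAt (fun s : ℝ => exp (s • A) i j) ((A * exp (t • A)) i j) t := by
  have := hasDerivAt_exp_comp_linear A
    { toFun := fun X => X i j, map_add' := fun X Y => rfl, map_smul' := fun c X => rfl } t
  exact this

lemma exp_zero_smul (A : Matrix (Fin n) (Fin n) ℝ) : exp ((0:ℝ) • A) = 1 := by
  rw [zero_smul]; exact exp_zero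

lemma exp_neg_mul (A : Matrix (Fin n) (Fin n) ℝ) (t : ℝ) :
    exp (t • A) * exp (t • (-A)) = 1 := by
  have h : Commute (t • A) (t • (-A)) :=
    (((Commute.refl A).neg_right).smul_left t).smul_right t
  rw [← Matrix.exp_add_of_commute _ _ h, smul_neg, add_neg_cancel]
  exact exp_zero

lemma ode_solution (A : Matrix (Fin n) (Fin n) ℝ) (x : ℝ → Fin n → ℝ)
    (hx : Differentiable ℝ x)
    (hode : ∀ t : ℝ, 0 ≤ t → deriv x t = A.mulVec (x t)) :
    ∀ t : ℝ, 0 ≤ t → x t = (exp (t • A)).mulVec (x 0) := by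
  set g : ℝ → Fin n → ℝ := fun s => (exp (s • (-A))).mulVec (x s) with hgdef
  have hcommE : ∀ s : ℝ, exp (s • (-A)) * A = A * exp (s • (-A)) := by
    intro s
    exact (((Commute.refl A).neg_left).smul_left s).exp_left
  have hgd : ∀ s : ℝ, 0 ≤ s → HasDerivAt g 0 s := by
    intro s hs
    rw [hasDerivAt_pi]
    intro i
    have hterm : ∀ j : Fin n, HasDerivAt (fun u : ℝ => exp (u • (-A)) i j * x u j)
        ((((-A) * exp (s • (-A))) i j) * x s j
          + exp (s • (-A)) i j * deriv x s j) s := fun j =>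
      (hasDerivAt_exp_entry (-A) i j s).mul (hasDerivAt_pi.1 (hx s).hasDerivAt j)
    have hsum := HasDerivAt.sum (u := Finset.univ) (fun j _ => hterm j)
    have hzero : (∑ j : Fin n, ((((-A) * exp (s • (-A))) i j) * x s j
        + exp (s • (-A)) i j * deriv x s j)) = 0 := by
      rw [Finset.sum_add_distrib, hode s hs]
      have e1 : (∑ j : Fin n, (((-A) * exp (s • (-A))) i j) * x s j)
          = (((-A) * exp (s • (-A))).mulVec (x s)) i := rfl
      have e2 : (∑ j : Fin n, exp (s • (-A)) i j * (A.mulVec (x s)) j)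
          = ((exp (s • (-A)) * A).mulVec (x s)) i := by
        rw [← Matrix.mulVec_mulVec]; rfl
      rw [e1, e2, hcommE s, neg_mul, Matrix.neg_mulVec]
      simp
    rw [hzero] at hsum
    have : (∑ j : Fin n, fun u : ℝ => exp (u • (-A)) i j * x u j) = fun u => g u i := by
      funext u; rw [Finset.sum_apply]; rfl
    rw [this] at hsum
    exact hsum
  have hconst : ∀ t : ℝ, 0 ≤ t → g t = g 0 := by
    intro t ht
    exact constant_of_has_deriv_right_zero
      (fun s hs => (hgd s hs.1).continuousAt.continuousWithinAt)
      (fun s hs => (hgd s hs.1).hasDerivWithinAt) t ⟨ht, le_rfl⟩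
  have hg0 : g 0 = x 0 := by
    rw [hgdef]; simp only [exp_zero_smul, Matrix.one_mulVec]
  intro t ht
  calc x t = ((exp (t • A)) * (exp (t • (-A)))).mulVec (x t) := by
        rw [exp_neg_mul, Matrix.one_mulVec]
    _ = (exp (t • A)).mulVec (g t) := by rw [← Matrix.mulVec_mulVec]
    _ = (exp (t • A)).mulVec (x 0) := by rw [hconst t ht, hg0]


lemma obs_invariant {q : Type*} [Fintype q] (A : Matrix (Fin n) (Fin n) ℝ)
    (Ct : Matrix q (Fin n) ℝ) (x0 : Fin n → ℝ)
    (h : ∀ t : ℝ, 0 ≤ t → Ct.mulVec ((exp (t • A)).mulVec x0) = 0) :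
    ∀ j : ℕ, (Ct * A ^ j).mulVec x0 = 0 := by
  have key : ∀ j : ℕ, ∀ t : ℝ, 0 ≤ t → ((Ct * A ^ j) * exp (t • A)).mulVec x0 = 0 := by
    intro j
    induction j with
    | zero =>
      intro t ht
      rw [pow_zero, Matrix.mul_one, ← Matrix.mulVec_mulVec]
      exact h t ht
    | succ j ih =>
      intro t ht
      have h1 := (hasDerivAt_expVec A (Ct * A ^ j) x0 t).hasDerivWithinAt (s := Set.Ici t)
      have h2 : HasDerivWithinAt (fun s : ℝ => ((Ct * A ^ j) * exp (s • A)).mulVec x0)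
          0 (Set.Ici t) t := by
        have hc : HasDerivWithinAt (fun _ : ℝ => (0 : q → ℝ)) 0 (Set.Ici t) t :=
          (hasDerivAt_const t (0 : q → ℝ)).hasDerivWithinAt
      
        exact hc.congr (fun s hs => ih s (le_trans ht hs)) (ih t ht)
      have hu : UniqueDiffWithinAt ℝ (Set.Ici t) t :=
        uniqueDiffOn_Ici t t Set.self_mem_Ici
      have := (h1.derivWithin hu).symm.trans (h2.derivWithin hu)
      calc ((Ct * A ^ (j+1)) * exp (t • A)).mulVec x0
          = ((Ct * A ^ j) * (A * exp (t • A))).mulVec x0 := by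
            rw [pow_succ, ← Matrix.mul_assoc, Matrix.mul_assoc]
        _ = 0 := this
  intro j
  have := key j 0 le_rfl
  rw [zero_smul, exp_zero, Matrix.mul_one] at this
  exact this


lemma exp_map_ofReal (A : Matrix (Fin n) (Fin n) ℝ) (t : ℝ) :
    (exp (t • A)).map Complex.ofReal = exp ((t : ℂ) • A.map Complex.ofReal) := by
  letI : NormedRing (Matrix (Fin n) (Fin n) ℝ) := Matrix.linftyOpNormedRing
  letI : NormedAlgebra ℝ (Matrix (Fin n) (Fin n) ℝ) := Matrix.linftyOpNormedAlgebra
  letI : NormedRing (Matrix (Fin n) (Fin n) ℂ) := Matrix.linftyOpNormedRing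
  letI : NormedAlgebra ℝ (Matrix (Fin n) (Fin n) ℂ) := Matrix.linftyOpNormedAlgebra
  letI : NormedAlgebra ℂ (Matrix (Fin n) (Fin n) ℂ) := Matrix.linftyOpNormedAlgebra
  letI : NormedAlgebra ℚ (Matrix (Fin n) (Fin n) ℝ) := Matrix.linftyOpNormedAlgebra
  have hf : Continuous (Complex.ofRealHom.mapMatrix :
      Matrix (Fin n) (Fin n) ℝ →+* Matrix (Fin n) (Fin n) ℂ) := by
    apply continuous_matrix
    intro i j
    exact Complex.continuous_ofReal.comp ((continuous_apply j).comp (continuous_apply i))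
  have h := map_exp (Complex.ofRealHom.mapMatrix :
      Matrix (Fin n) (Fin n) ℝ →+* Matrix (Fin n) (Fin n) ℂ) hf (t • A)
  have h2 : (Complex.ofRealHom.mapMatrix (t • A) : Matrix (Fin n) (Fin n) ℂ)
      = (t : ℂ) • A.map Complex.ofReal := by
    ext i j
    simp [RingHom.mapMatrix_apply, Matrix.map_apply]
  have h3 : (Complex.ofRealHom.mapMatrix (exp (t • A)) : Matrix (Fin n) (Fin n) ℂ)
      = (exp (t • A)).map Complex.ofReal := rfl
  exact h3.symm.trans (h.trans (congrArg _ h2))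


lemma exp_mulVec_nilpotent {k : ℕ} (Mc : Matrix (Fin n) (Fin n) ℂ) (μ : ℂ) (v : Fin n → ℂ)
    (hnil : ((Mc - μ • 1) ^ k).mulVec v = 0) (t : ℂ) :
    (exp (t • Mc)).mulVec v =
      Complex.exp (t * μ) • ∑ j ∈ Finset.range k,
        ((t ^ j * (j.factorial : ℂ)⁻¹)) • ((Mc - μ • 1) ^ j).mulVec v := by
  letI : NormedRing (Matrix (Fin n) (Fin n) ℂ) := Matrix.linftyOpNormedRing
  letI : NormedAlgebra ℂ (Matrix (Fin n) (Fin n) ℂ) := Matrix.linftyOpNormedAlgebra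
  set N : Matrix (Fin n) (Fin n) ℂ := Mc - μ • 1 with hN
  have hsplit : t • Mc = (t * μ) • (1 : Matrix (Fin n) (Fin n) ℂ) + t • N := by
    have h : t • N = t • Mc - (t * μ) • (1 : Matrix (Fin n) (Fin n) ℂ) := by
      rw [hN, smul_sub, smul_smul]
    rw [h]
    abel
  have hcomm : Commute ((t * μ) • (1 : Matrix (Fin n) (Fin n) ℂ)) (t • N) :=
    ((Commute.one_left N).smul_left (t*μ)).smul_right t
  have hsc : exp ((t * μ) • (1 : Matrix (Fin n) (Fin n) ℂ))
      = Complex.exp (t * μ) • (1 : Matrix (Fin n) (Fin n) ℂ) := by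
    have h := algebraMap_exp_comm (𝕂 := ℂ) (𝔸 := Matrix (Fin n) (Fin n) ℂ) (t * μ)
    rw [← Complex.exp_eq_exp_ℂ, Algebra.algebraMap_eq_smul_one] at h
    rw [← Algebra.algebraMap_eq_smul_one]
    exact h.symm
  have hexp : exp (t • Mc) = Complex.exp (t * μ) • exp (t • N) := by
    rw [hsplit, Matrix.exp_add_of_commute _ _ hcomm, hsc, smul_mul_assoc, Matrix.one_mul]
  rw [hexp, Matrix.smul_mulVec]
  congr 1
  -- now: (exp (t • N)).mulVec v = ∑ j in range k, (t^j * (j!)⁻¹) • (N^j).mulVec v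
  have hker : ∀ j : ℕ, k ≤ j → (N ^ j).mulVec v = 0 := by
    intro j hj
    have : N ^ j = N ^ (j - k) * N ^ k := by
      rw [← pow_add]
      congr 1
      omega
    rw [this, ← Matrix.mulVec_mulVec, hnil, Matrix.mulVec_zero]
  have hexp_tsum : exp (t • N) = ∑' j : ℕ, ((j.factorial : ℂ)⁻¹) • (t • N) ^ j := by
    rw [exp_eq_tsum ℂ]
  -- linear map : mulVec by v
  let L : Matrix (Fin n) (Fin n) ℂ →ₗ[ℂ] (Fin n → ℂ) :=
    { toFun := fun X => X.mulVec v
      map_add' := by intro X Y; simp [Matrix.add_mulVec]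
      map_smul' := by intro c X; simp [Matrix.smul_mulVec] }
  have hLcont : Continuous L := L.continuous_of_finiteDimensional
  have hsumm : Summable (fun j : ℕ => ((j.factorial : ℂ)⁻¹) • (t • N) ^ j) :=
    expSeries_summable' (𝕂 := ℂ) (t • N)
  have hmap : (exp (t • N)).mulVec v
      = ∑' j : ℕ, ((j.factorial : ℂ)⁻¹) • ((t • N) ^ j).mulVec v := by
    rw [hexp_tsum]
    have h2 := (hsumm.hasSum.mapL L.toContinuousLinearMap).tsum_eq
    exact h2.symm.trans (tsum_congr fun j => L.toContinuousLinearMap.map_smul _ _)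
  rw [hmap]
  rw [tsum_eq_sum (s := Finset.range k) ?_]
  · apply Finset.sum_congr rfl
    intro j hj
    rw [smul_pow, Matrix.smul_mulVec, smul_smul, mul_comm]
  · intro j hj
    rw [smul_pow, Matrix.smul_mulVec, hker j (by simpa using hj)]
    simp


lemma tendsto_texp (a : ℝ) (ha : 0 < a) (j : ℕ) :
    Tendsto (fun t : ℝ => Real.exp (-(a * t)) * t ^ j) atTop (nhds 0) := by
  have h1 := Real.tendsto_pow_mul_exp_neg_atTop_nhds_zero j
  have h2 : Tendsto (fun t : ℝ => a * t) atTop atTop :=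
    Tendsto.const_mul_atTop ha tendsto_id
  have h3 := (h1.comp h2).const_mul ((a : ℝ) ^ j)⁻¹
  rw [mul_zero] at h3
  apply h3.congr
  intro t
  simp only [Function.comp_apply]
  rw [mul_pow]
  field_simp


lemma map_ofReal_mul {a b c : Type*} [Fintype b] (M : Matrix a b ℝ) (N : Matrix b c ℝ) :
    (M * N).map Complex.ofReal = M.map Complex.ofReal * N.map Complex.ofReal := by
  ext i j
  simp [Matrix.mul_apply, Matrix.map_apply]

lemma tendsto_ofReal_pi {q : Type*} [Fintype q] (g : ℝ → q → ℝ) :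
    Filter.Tendsto (fun t => fun i => ((g t i : ℝ) : ℂ)) Filter.atTop (nhds 0) ↔
      Filter.Tendsto g Filter.atTop (nhds 0) := by
  constructor <;> intro h <;> rw [tendsto_pi_nhds] <;> intro i <;>
    simp only [Pi.zero_apply]
  · have hi := ((continuous_apply i).tendsto (0 : q → ℂ)).comp h
    simp only [Function.comp_def, Pi.zero_apply] at hi
    rw [tendsto_zero_iff_norm_tendsto_zero] at hi ⊢
    convert hi using 2 with t
    rw [Complex.norm_real]
  · have hi := ((continuous_apply i).tendsto (0 : q → ℝ)).comp h
    simp only [Function.comp_def, Pi.zero_apply] at hi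
    rw [tendsto_zero_iff_norm_tendsto_zero] at hi ⊢
    convert hi using 2 with t
    rw [Complex.norm_real]

end Stmt10Aux

open Stmt10Aux

/-- **Lemma 4 of the paper.** The multi-output system `(A, C₁, …, C_l)` is
jointly partially detectable with respect to `K` (ODE form) if and only if for every
`λ ∈ ℂ` with `Re λ ≥ 0`, `rank [D_{[A,C̃],n,λ}; K] = rank D_{[A,C̃],n,λ}`, where `C̃` is
the vertical stack of `C₁, …, C_l`. -/
theorem stmt_10 (n r l : ℕ) (p : Fin l → ℕ)
    (A : Matrix (Fin n) (Fin n) ℝ)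
    (C : (i : Fin l) → Matrix (Fin (p i)) (Fin n) ℝ)
    (K : Matrix (Fin r) (Fin n) ℝ)
    (Ctil : Matrix ((i : Fin l) × Fin (p i)) (Fin n) ℝ)
    (hCtil : ∀ (i : Fin l) (a : Fin (p i)) (j : Fin n), Ctil ⟨i, a⟩ j = C i a j) :
    (∀ x : ℝ → (Fin n → ℝ), Differentiable ℝ x →
        (∀ t : ℝ, 0 ≤ t → deriv x t = A.mulVec (x t)) →
        (∀ t : ℝ, 0 ≤ t → ∀ i : Fin l, (C i).mulVec (x t) = 0) →
        Filter.Tendsto (fun t => K.mulVec (x t)) Filter.atTop (nhds 0)) ↔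
    (∀ lam : ℂ, 0 ≤ lam.re →
        (Matrix.fromRows (Dstack n A Ctil lam) (K.map Complex.ofReal)).rank =
          (Dstack n A Ctil lam).rank) := by
  classical
  set Ac : Matrix (Fin n) (Fin n) ℂ := A.map Complex.ofReal with hAcdef
  set Kc : Matrix (Fin r) (Fin n) ℂ := K.map Complex.ofReal with hKcdef
  set Cc : Matrix ((i : Fin l) × Fin (p i)) (Fin n) ℂ := Ctil.map Complex.ofReal with hCcdef
  -- basic sign-swapping and helpers
  have hswap : ∀ (M : Matrix (Fin n) (Fin n) ℂ) (m : ℕ) (u : Fin n → ℂ),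
      ((-M) ^ m).mulVec u = ((-1 : ℂ) ^ m) • ((M ^ m).mulVec u) := by
    intro M m u
    rw [← neg_one_smul ℂ M, smul_pow, Matrix.smul_mulVec]
  have hsgn : ∀ (m : ℕ), ((-1 : ℂ) ^ m) ≠ 0 := fun m => pow_ne_zero m (by norm_num)
  have hCtilVec : ∀ w : Fin n → ℝ,
      (Ctil.mulVec w = 0 ↔ ∀ i : Fin l, (C i).mulVec w = 0) := by
    intro w
    constructor
    · intro h i
      funext a
      have := congrFun h ⟨i, a⟩
      simpa [Matrix.mulVec, dotProduct, hCtil] using this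
    · intro h
      funext ia
      obtain ⟨i, a⟩ := ia
      have := congrFun (h i) a
      simpa [Matrix.mulVec, dotProduct, hCtil] using this
  constructor
  · -- detectability → rank condition
    intro H lam hlam
    rw [rank_fromRows_eq_iff]
    intro v hDv
    by_contra hKv
    rw [dstack_mulVec_eq_zero_iff] at hDv
    obtain ⟨hC0, hNn⟩ := hDv
    set Bm : Matrix (Fin n) (Fin n) ℂ := Ac - lam • 1 with hBmdef
    have hBneg : lam • (1 : Matrix (Fin n) (Fin n) ℂ) - Ac = -Bm := by
      rw [hBmdef, neg_sub]
    -- nilpotency facts in terms of Bm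
    have hNn' : (Bm ^ n).mulVec v = 0 := by
      have := hNn
      rw [hBneg, hswap, smul_eq_zero] at this
      exact this.resolve_left (hsgn n)
    have hBstar : ∀ m : ℕ, n ≤ m → (Bm ^ m).mulVec v = 0 := by
      intro m hm
      have hsplit : Bm ^ m = Bm ^ (m - n) * Bm ^ n := by
        rw [← pow_add]; congr 1; omega
      rw [hsplit, ← Matrix.mulVec_mulVec, hNn', Matrix.mulVec_zero]
    have hCstar : ∀ m : ℕ, Cc.mulVec ((Bm ^ m).mulVec v) = 0 := by
      intro m
      by_cases hmn : m < n
      · have := hC0 ⟨m, hmn⟩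
        rw [← Matrix.mulVec_mulVec] at this
        rw [hBneg, hswap, Matrix.mulVec_smul, smul_eq_zero] at this
        exact this.resolve_left (hsgn m)
      · rw [hBstar m (by omega), Matrix.mulVec_zero]
    -- if n = 0, v = 0, contradiction
    rcases Nat.eq_zero_or_pos n with hn0 | hnpos
    · apply hKv
      have hv0 : v = 0 := by
        funext i
        have := i.2
        omega
      rw [hv0, Matrix.mulVec_zero]
    -- choose maximal s with K (Bm^s v) ≠ 0
    set P : ℕ → Prop := fun j => Kc.mulVec ((Bm ^ j).mulVec v) ≠ 0 with hPdef
    have hP0 : P 0 := by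
      show Kc.mulVec ((Bm ^ 0).mulVec v) ≠ 0
      rw [pow_zero, Matrix.one_mulVec]
      exact hKv
    set s : ℕ := Nat.findGreatest P n with hsdef
    have hPs : P s := Nat.findGreatest_spec (Nat.zero_le n) hP0
    have hPmax : ∀ j : ℕ, 1 ≤ j → Kc.mulVec ((Bm ^ (s + j)).mulVec v) = 0 := by
      intro j hj
      by_cases hsj : s + j ≤ n
      · by_contra hne
        exact Nat.findGreatest_is_greatest (P := P) (n := n) (k := s + j) (by omega) hsj hne
      · rw [hBstar (s + j) (by omega), Matrix.mulVec_zero]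
    set w : Fin n → ℂ := (Bm ^ s).mulVec v with hwdef
    have hKw : Kc.mulVec w ≠ 0 := hPs
    have hpows : ∀ m : ℕ, (Bm ^ m).mulVec w = (Bm ^ (s + m)).mulVec v := by
      intro m
      rw [hwdef, Matrix.mulVec_mulVec, ← pow_add, add_comm]
    have hKwj : ∀ m : ℕ, 1 ≤ m → Kc.mulVec ((Bm ^ m).mulVec w) = 0 := by
      intro m hm
      rw [hpows m]
      exact hPmax m hm
    have hCw : ∀ m : ℕ, Cc.mulVec ((Bm ^ m).mulVec w) = 0 := by
      intro m
      rw [hpows m]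
      exact hCstar (s + m)
    have hnilw : ((Ac - lam • 1) ^ n).mulVec w = 0 := by
      rw [← hBmdef, hpows n]
      exact hBstar (s + n) (by omega)
    -- real solutions
    set w1 : Fin n → ℝ := fun i => (w i).re with hw1def
    set w2 : Fin n → ℝ := fun i => (w i).im with hw2def
    have hexpmv : ∀ (u : Fin n → ℝ) (t : ℝ),
        HasDerivAt (fun s : ℝ => (exp (s • A)).mulVec u)
          ((A * exp (t • A)).mulVec u) t := by
      intro u t
      have h := hasDerivAt_expVec A (1 : Matrix (Fin n) (Fin n) ℝ) u t
      simpa [Matrix.one_mul] using h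
    -- common facts for a real initial vector u whose complexification is W-like
    -- z-computation
    have hz : ∀ t : ℝ, (exp ((t : ℂ) • Ac)).mulVec w =
        Complex.exp ((t : ℂ) * lam) • ∑ j ∈ Finset.range n,
          (((t : ℂ) ^ j * (j.factorial : ℂ)⁻¹)) • ((Ac - lam • 1) ^ j).mulVec w := by
      intro t
      exact exp_mulVec_nilpotent Ac lam w hnilw (t : ℂ)
    -- C applied to z is 0
    have hCz : ∀ t : ℝ, Cc.mulVec ((exp ((t : ℂ) • Ac)).mulVec w) = 0 := by
      intro t
      rw [hz t]
      rw [Matrix.mulVec_smul]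
      have : Cc.mulVec (∑ j ∈ Finset.range n,
          (((t : ℂ) ^ j * (j.factorial : ℂ)⁻¹)) • ((Ac - lam • 1) ^ j).mulVec w) = 0 := by
        rw [show ∀ (u : Fin n → ℂ), Cc.mulVec u = Cc.mulVecLin u from fun u => rfl]
        rw [_root_.map_sum]
        apply Finset.sum_eq_zero
        intro j hj
        rw [_root_.map_smul]
        have : Cc.mulVecLin (((Ac - lam • 1) ^ j).mulVec w) = 0 := by
          show Cc.mulVec _ = 0
          rw [← hBmdef]
          exact hCw j
        rw [this, smul_zero]
      rw [this, smul_zero]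
    -- K applied to z
    have hKz : ∀ t : ℝ, Kc.mulVec ((exp ((t : ℂ) • Ac)).mulVec w) =
        Complex.exp ((t : ℂ) * lam) • Kc.mulVec w := by
      intro t
      rw [hz t, Matrix.mulVec_smul]
      congr 1
      rw [show ∀ (u : Fin n → ℂ), Kc.mulVec u = Kc.mulVecLin u from fun u => rfl, _root_.map_sum]
      rw [Finset.sum_eq_single_of_mem 0 (Finset.mem_range.2 hnpos)]
      · simp [Matrix.mulVecLin_apply]
      · intro j hj hj0
        rw [_root_.map_smul]
        have : Kc.mulVecLin (((Ac - lam • 1) ^ j).mulVec w) = 0 := by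
          show Kc.mulVec _ = 0
          rw [← hBmdef]
          exact hKwj j (by omega)
        rw [this, smul_zero]
    -- decomposition into real trajectories
    have hdec : ∀ {q : Type} [Fintype q] (Mq : Matrix q (Fin n) ℝ) (t : ℝ),
        (Mq.map Complex.ofReal).mulVec ((exp ((t : ℂ) • Ac)).mulVec w) =
          (fun i => (((Mq.mulVec ((exp (t • A)).mulVec w1)) i : ℝ) : ℂ)) +
            Complex.I • (fun i => (((Mq.mulVec ((exp (t • A)).mulVec w2)) i : ℝ) : ℂ)) := by
      intro q _ Mq t
      rw [← exp_map_ofReal, Matrix.mulVec_mulVec, ← map_ofReal_mul, mulVec_re_im,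
        ← Matrix.mulVec_mulVec, ← Matrix.mulVec_mulVec]
    set x1 : ℝ → Fin n → ℝ := fun t => (exp (t • A)).mulVec w1 with hx1def
    set x2 : ℝ → Fin n → ℝ := fun t => (exp (t • A)).mulVec w2 with hx2def
    have hdiff1 : Differentiable ℝ x1 := fun t => (hexpmv w1 t).differentiableAt
    have hdiff2 : Differentiable ℝ x2 := fun t => (hexpmv w2 t).differentiableAt
    have hderiv1 : ∀ t : ℝ, 0 ≤ t → deriv x1 t = A.mulVec (x1 t) := by
      intro t _
      rw [hx1def, (hexpmv w1 t).deriv, ← Matrix.mulVec_mulVec]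
    have hderiv2 : ∀ t : ℝ, 0 ≤ t → deriv x2 t = A.mulVec (x2 t) := by
      intro t _
      rw [hx2def, (hexpmv w2 t).deriv, ← Matrix.mulVec_mulVec]
    have hout12 : ∀ t : ℝ, Ctil.mulVec (x1 t) = 0 ∧ Ctil.mulVec (x2 t) = 0 := by
      intro t
      have h0 := hCz t
      rw [hdec Ctil t] at h0
      constructor
      · show Ctil.mulVec ((exp (t • A)).mulVec w1) = 0
        funext ia
        have := congrFun h0 ia
        simp only [Pi.add_apply, Pi.smul_apply, Pi.zero_apply, smul_eq_mul,
          Complex.ext_iff, Complex.add_re, Complex.add_im, Complex.mul_re, Complex.mul_im,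
          Complex.I_re, Complex.I_im, Complex.ofReal_re, Complex.ofReal_im,
          Complex.zero_re, Complex.zero_im] at this
        simpa using this.1
      · show Ctil.mulVec ((exp (t • A)).mulVec w2) = 0
        funext ia
        have := congrFun h0 ia
        simp only [Pi.add_apply, Pi.smul_apply, Pi.zero_apply, smul_eq_mul,
          Complex.ext_iff, Complex.add_re, Complex.add_im, Complex.mul_re, Complex.mul_im,
          Complex.I_re, Complex.I_im, Complex.ofReal_re, Complex.ofReal_im,
          Complex.zero_re, Complex.zero_im] at this
        simpa using this.2
    have hT1 := H x1 hdiff1 hderiv1 (fun t _ i => (hCtilVec (x1 t)).1 (hout12 t).1 i)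
    have hT2 := H x2 hdiff2 hderiv2 (fun t _ i => (hCtilVec (x2 t)).1 (hout12 t).2 i)
    -- the complex output tends to 0
    have hF0 : Tendsto (fun t : ℝ => Kc.mulVec ((exp ((t : ℂ) • Ac)).mulVec w))
        atTop (nhds 0) := by
      have h1 := (tendsto_ofReal_pi (fun t => K.mulVec (x1 t))).2 hT1
      have h2 := ((tendsto_ofReal_pi (fun t => K.mulVec (x2 t))).2 hT2).const_smul Complex.I
      have h3 := h1.add h2
      simp only [smul_zero, add_zero] at h3
      apply h3.congr
      intro t
      exact (hdec K t).symm
    -- but the complex output has constant norm ≥ ‖Kc w‖ > 0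
    obtain ⟨i0, hi0⟩ := Function.ne_iff.1 hKw
    simp only [Pi.zero_apply] at hi0
    have hcomp : Tendsto (fun t : ℝ => Complex.exp ((t : ℂ) * lam) * (Kc.mulVec w i0))
        atTop (nhds 0) := by
      have := ((continuous_apply i0).tendsto (0 : Fin r → ℂ)).comp hF0
      simp only [Function.comp_def, Pi.zero_apply] at this
      apply this.congr
      intro t
      rw [hKz t]
      simp
    have hnorm := hcomp.norm
    rw [norm_zero] at hnorm
    have hpos : 0 < ‖Kc.mulVec w i0‖ := norm_pos_iff.2 hi0
    have hev := hnorm.eventually_lt_const hpos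
    obtain ⟨t, ht0, htlt⟩ := (hev.and (eventually_ge_atTop (0:ℝ))).exists
    rw [norm_mul] at ht0
    have hne : ‖Complex.exp ((t : ℂ) * lam)‖ = Real.exp (t * lam.re) := by
      rw [Complex.norm_exp]
      congr 1
      simp [Complex.mul_re]
    rw [hne] at ht0
    have h1le : (1 : ℝ) ≤ Real.exp (t * lam.re) := by
      rw [← Real.exp_zero]
      exact Real.exp_le_exp.2 (mul_nonneg htlt hlam)
    nlinarith [hpos]
  · -- rank condition → detectability
    intro hrank x hxdiff hxode hxout
    have hsol := ode_solution A x hxdiff hxode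
    set x0 : Fin n → ℝ := x 0 with hx0def
    have hout' : ∀ t : ℝ, 0 ≤ t → Ctil.mulVec ((exp (t • A)).mulVec x0) = 0 := by
      intro t ht
      rw [← hsol t ht]
      exact (hCtilVec (x t)).2 (fun i => hxout t ht i)
    have hobs := obs_invariant A Ctil x0 hout'
    set x0c : Fin n → ℂ := fun i => ((x0 i : ℝ) : ℂ) with hx0cdef
    have hmapPow : ∀ j : ℕ, (A ^ j).map Complex.ofReal = Ac ^ j := by
      intro j
      induction j with
      | zero =>
        rw [pow_zero, pow_zero]
        exact Matrix.map_one _ Complex.ofReal_zero Complex.ofReal_one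
      | succ j ih => rw [pow_succ, map_ofReal_mul, ih, pow_succ]
    have hobsc : ∀ j : ℕ, (Cc * Ac ^ j).mulVec x0c = 0 := by
      intro j
      have h2 : ((Ctil * A ^ j).map Complex.ofReal).mulVec x0c = 0 := by
        rw [hx0cdef, ofReal_mulVec, hobs j]
        funext i
        simp
      rw [map_ofReal_mul, hmapPow] at h2
      exact h2
    -- the unobservable subspace
    let W : Submodule ℂ (Fin n → ℂ) :=
      { carrier := {u | ∀ j : ℕ, (Cc * Ac ^ j).mulVec u = 0}
        add_mem' := by
          intro a b ha hb
          intro j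
          rw [Matrix.mulVec_add, ha j, hb j, add_zero]
        zero_mem' := by
          intro j
          rw [Matrix.mulVec_zero]
        smul_mem' := by
          intro c a ha
          intro j
          rw [Matrix.mulVec_smul, ha j, smul_zero] }
    have hWmem : ∀ u : Fin n → ℂ, u ∈ W ↔ ∀ j : ℕ, (Cc * Ac ^ j).mulVec u = 0 :=
      fun u => Iff.rfl
    have hx0W : x0c ∈ W := hobsc
    have hWC : ∀ u : Fin n → ℂ, u ∈ W → Cc.mulVec u = 0 := by
      intro u hu
      have := (hWmem u).1 hu 0
      rwa [pow_zero, Matrix.mul_one] at this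
    have hWA : ∀ u : Fin n → ℂ, u ∈ W → Ac.mulVec u ∈ W := by
      intro u hu
      rw [hWmem]
      intro j
      rw [Matrix.mulVec_mulVec, Matrix.mul_assoc, ← pow_succ]
      exact (hWmem u).1 hu (j + 1)
    have hφinv : ∀ u ∈ W, (Matrix.toLinAlgEquiv' Ac) u ∈ W := by
      intro u hu
      rw [Matrix.toLinAlgEquiv'_apply]
      exact hWA u hu
    set f : Module.End ℂ W :=
      (Matrix.toLinAlgEquiv' Ac : Module.End ℂ (Fin n → ℂ)).restrict hφinv with hfdef
    have htop := Module.End.iSup_maxGenEigenspace_eq_top f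
    have hx0top : (⟨x0c, hx0W⟩ : W) ∈ ⨆ μ : ℂ, f.maxGenEigenspace μ := by
      rw [htop]
      trivial
    rw [Submodule.mem_iSup_iff_exists_finsupp] at hx0top
    obtain ⟨d, hd, hdsum⟩ := hx0top
    -- nilpotency transferred to matrices
    have hEndMat : ∀ (μ : ℂ) (m : ℕ) (u : Fin n → ℂ),
        (((Matrix.toLinAlgEquiv' Ac : Module.End ℂ (Fin n → ℂ)) - μ • 1) ^ m) u
          = ((Ac - μ • 1) ^ m).mulVec u := by
      intro μ m u
      have h1 : Matrix.toLinAlgEquiv' (Ac - μ • 1)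
          = (Matrix.toLinAlgEquiv' Ac : Module.End ℂ (Fin n → ℂ)) - μ • 1 := by
        rw [map_sub, ← Algebra.algebraMap_eq_smul_one, AlgEquiv.commutes,
          Algebra.algebraMap_eq_smul_one]
      rw [← h1, ← _root_.map_pow, Matrix.toLinAlgEquiv'_apply]
    have hnil : ∀ (μ : ℂ) (u : W), u ∈ f.maxGenEigenspace μ →
        ((Ac - μ • 1) ^ n).mulVec (u : Fin n → ℂ) = 0 := by
      intro μ u hu
      have hu' : u ∈ Module.End.genEigenspace f μ ⊤ := hu
      rw [hfdef, Module.End.genEigenspace_restrict] at hu'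
      have h1 : (u : Fin n → ℂ) ∈
          Module.End.maxGenEigenspace (Matrix.toLinAlgEquiv' Ac) μ := hu'
      rw [Module.End.maxGenEigenspace_eq_genEigenspace_finrank, Module.finrank_fin_fun,
        Module.End.mem_genEigenspace_nat, LinearMap.mem_ker, hEndMat] at h1
      exact h1
    -- main convergence for each generalized eigenvector in W
    have hmain : ∀ (μ : ℂ) (u : W), u ∈ f.maxGenEigenspace μ →
        Tendsto (fun t : ℝ => Kc.mulVec ((exp ((t : ℂ) • Ac)).mulVec (u : Fin n → ℂ)))
          atTop (nhds 0) := by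
      intro μ u hu
      set Bm : Matrix (Fin n) (Fin n) ℂ := Ac - μ • 1 with hBmdef
      have hBneg : μ • (1 : Matrix (Fin n) (Fin n) ℂ) - Ac = -Bm := by
        rw [hBmdef, neg_sub]
      have hnilu : (Bm ^ n).mulVec (u : Fin n → ℂ) = 0 := hnil μ u hu
      have hBnil' : ∀ m : ℕ, n ≤ m → (Bm ^ m).mulVec (u : Fin n → ℂ) = 0 := by
        intro m hm
        have hsplit : Bm ^ m = Bm ^ (m - n) * Bm ^ n := by
          rw [← pow_add]
          congr 1
          omega
        rw [hsplit, ← Matrix.mulVec_mulVec, hnilu, Matrix.mulVec_zero]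
      have hzf : ∀ t : ℝ, (exp ((t : ℂ) • Ac)).mulVec (u : Fin n → ℂ) =
          Complex.exp ((t : ℂ) * μ) • ∑ j ∈ Finset.range n,
            (((t : ℂ) ^ j * (j.factorial : ℂ)⁻¹)) • ((Bm ^ j).mulVec (u : Fin n → ℂ)) :=
        fun t => exp_mulVec_nilpotent Ac μ _ hnilu (t : ℂ)
      have hKzf : ∀ t : ℝ, Kc.mulVec ((exp ((t : ℂ) • Ac)).mulVec (u : Fin n → ℂ)) =
          ∑ j ∈ Finset.range n,
            (Complex.exp ((t : ℂ) * μ) * ((t : ℂ) ^ j * (j.factorial : ℂ)⁻¹)) •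
              Kc.mulVec ((Bm ^ j).mulVec (u : Fin n → ℂ)) := by
        intro t
        rw [hzf t, Matrix.mulVec_smul,
          show ∀ (y : Fin n → ℂ), Kc.mulVec y = Kc.mulVecLin y from fun _ => rfl,
          _root_.map_sum, Finset.smul_sum]
        apply Finset.sum_congr rfl
        intro j hj
        rw [_root_.map_smul, smul_smul]
        rfl
      by_cases hre : 0 ≤ μ.re
      · -- terms vanish by the rank condition
        have hker := (rank_fromRows_eq_iff (Dstack n A Ctil μ) Kc).1 (hrank μ hre)
        have hWB : ∀ y ∈ W, Bm.mulVec y ∈ W := by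
          intro y hy
          rw [hBmdef, Matrix.sub_mulVec, Matrix.smul_mulVec, Matrix.one_mulVec]
          exact W.sub_mem (hWA y hy) (W.smul_mem μ hy)
        have hupow : ∀ m : ℕ, (Bm ^ m).mulVec (u : Fin n → ℂ) ∈ W := by
          intro m
          induction m with
          | zero =>
            rw [pow_zero, Matrix.one_mulVec]
            exact u.2
          | succ m ih =>
            rw [pow_succ', ← Matrix.mulVec_mulVec]
            exact hWB _ ih
        have hKj : ∀ j : ℕ, Kc.mulVec ((Bm ^ j).mulVec (u : Fin n → ℂ)) = 0 := by
          intro j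
          apply hker
          rw [dstack_mulVec_eq_zero_iff]
          constructor
          · intro m
            rw [hBneg, ← Matrix.mulVec_mulVec, hswap, Matrix.mulVec_smul,
              Matrix.mulVec_mulVec, Matrix.mulVec_mulVec, Matrix.mul_assoc, ← pow_add,
              ← Matrix.mulVec_mulVec, hWC _ (hupow ((m : ℕ) + j)), smul_zero]
          · rw [hBneg, hswap, Matrix.mulVec_mulVec, ← pow_add,
              hBnil' (n + j) (by omega), smul_zero]
        have hzero : (fun t : ℝ =>
            Kc.mulVec ((exp ((t : ℂ) • Ac)).mulVec (u : Fin n → ℂ))) = fun _ => 0 := by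
          funext t
          rw [hKzf t]
          apply Finset.sum_eq_zero
          intro j hj
          rw [hKj j, smul_zero]
        rw [hzero]
        exact tendsto_const_nhds
      · -- decaying exponential
        push_neg at hre
        have hsum : Tendsto (fun t : ℝ => ∑ j ∈ Finset.range n,
            (Complex.exp ((t : ℂ) * μ) * ((t : ℂ) ^ j * (j.factorial : ℂ)⁻¹)) •
              Kc.mulVec ((Bm ^ j).mulVec (u : Fin n → ℂ))) atTop (nhds 0) := by
          have h0 : (0 : Fin r → ℂ) = ∑ j ∈ Finset.range n, (0 : Fin r → ℂ) := by simp
          rw [h0]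
          apply tendsto_finset_sum
          intro j hj
          have hs : Tendsto (fun t : ℝ =>
              Complex.exp ((t : ℂ) * μ) * ((t : ℂ) ^ j * (j.factorial : ℂ)⁻¹))
              atTop (nhds 0) := by
            rw [tendsto_zero_iff_norm_tendsto_zero]
            have hb : Tendsto (fun t : ℝ =>
                (Real.exp (-((-μ.re) * t)) * t ^ j) * ((j.factorial : ℝ))⁻¹) atTop (nhds 0) := by
              simpa using (tendsto_texp (-μ.re) (by linarith) j).mul_const ((j.factorial : ℝ))⁻¹
            apply hb.congr'
            filter_upwards [eventually_ge_atTop (0 : ℝ)] with t ht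
            rw [norm_mul, norm_mul, norm_pow, norm_inv]
            rw [Complex.norm_exp]
            rw [Complex.norm_real, Real.norm_eq_abs, abs_of_nonneg ht]
            rw [show ‖((j.factorial : ℂ))‖ = (j.factorial : ℝ) from by
              rw [Complex.norm_natCast]]
            rw [show ((t : ℂ) * μ).re = t * μ.re from by simp [Complex.mul_re]]
            ring
          simpa using hs.smul_const (Kc.mulVec ((Bm ^ j).mulVec (u : Fin n → ℂ)))
        apply hsum.congr
        intro t
        exact (hKzf t).symm
    -- assemble
    have hx0sum : x0c = ∑ μ ∈ d.support, ((d μ : W) : Fin n → ℂ) := by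
      calc x0c = ((⟨x0c, hx0W⟩ : W) : Fin n → ℂ) := rfl
        _ = ((d.sum fun _ v => v : W) : Fin n → ℂ) := by rw [hdsum]
        _ = ∑ μ ∈ d.support, ((d μ : W) : Fin n → ℂ) := by
            rw [Finsupp.sum]
            simp
    have hfinal : Tendsto (fun t : ℝ => Kc.mulVec ((exp ((t : ℂ) • Ac)).mulVec x0c))
        atTop (nhds 0) := by
      have hsplit : ∀ t : ℝ, Kc.mulVec ((exp ((t : ℂ) • Ac)).mulVec x0c)
          = ∑ μ ∈ d.support,
              Kc.mulVec ((exp ((t : ℂ) • Ac)).mulVec ((d μ : W) : Fin n → ℂ)) := by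
        intro t
        rw [hx0sum,
          show ∀ y, (exp ((t : ℂ) • Ac)).mulVec y = (exp ((t : ℂ) • Ac)).mulVecLin y
            from fun _ => rfl, _root_.map_sum,
          show ∀ y, Kc.mulVec y = Kc.mulVecLin y from fun _ => rfl, _root_.map_sum]
        rfl
      rw [funext hsplit]
      have := tendsto_finset_sum d.support (fun μ _ => hmain μ (d μ) (hd μ))
      simpa using this
    -- transfer to the real trajectory
    have hcompat : ∀ t : ℝ, (fun i => (((K.mulVec ((exp (t • A)).mulVec x0)) i : ℝ) : ℂ))
        = Kc.mulVec ((exp ((t : ℂ) • Ac)).mulVec x0c) := by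
      intro t
      have e1 : Kc.mulVec ((exp ((t : ℂ) • Ac)).mulVec x0c)
          = ((K * exp (t • A)).map Complex.ofReal).mulVec x0c := by
        rw [← exp_map_ofReal, Matrix.mulVec_mulVec, hKcdef, ← map_ofReal_mul]
      rw [e1, hx0cdef, ofReal_mulVec]
      funext i
      rw [Matrix.mulVec_mulVec]
    have hreal : Tendsto (fun t : ℝ => K.mulVec ((exp (t • A)).mulVec x0)) atTop (nhds 0) := by
      rw [← tendsto_ofReal_pi]
      apply hfinal.congr
      intro t
      exact (hcompat t).symm
    apply hreal.congr'
    filter_upwards [eventually_ge_atTop (0 : ℝ)] with t ht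
    rw [hsol t ht]
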